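/- arXiv:1406.6807 — 2 statements merged into one kernel-verified Lean document; each statement's English description precedes it below -/
import Mathlib

section
/- For 0 < σ < 1 and each k ∈ ℤⁿ, the Fourier transform of the function x ↦ (1+|x|²)^{-(n+2σ)/2} evaluated at k equals c_{n,σ} |k|^{2σ} ∫_0^∞ e^{-|k|²/(4r)} e^{-r} r^{-(1+σ)} dr for an explicit positive constant c_{n,σ} = ((4π)^{n/2} 4^σ Γ((n+2σ)/2))^{-1} (when k ≠ 0), via the subordination formula (1+|ξ|²)^{-s} = Γ(s)^{-1} ∫_0^∞ e^{-t} e^{-t|ξ|²} t^{s-1} dt. -/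
noncomputable section
open MeasureTheory Real RealInnerProductSpace

/-- The vector in `ℝⁿ` with coordinates `k i`. -/
def ivec {n : ℕ} (k : Fin n → ℤ) : EuclideanSpace ℝ (Fin n) := WithLp.toLp 2 (fun i => (k i : ℝ))

/-- The lattice point `2πk` of the lattice `2πℤⁿ`. -/
def lat {n : ℕ} (k : Fin n → ℤ) : EuclideanSpace ℝ (Fin n) := (2 * Real.pi) • ivec k

/-- The fundamental cube `Qₙ = (-π,π]ⁿ`. -/
def cube (n : ℕ) : Set (EuclideanSpace ℝ (Fin n)) :=
  WithLp.ofLp ⁻¹' (Set.univ.pi fun _ => Set.Ioc (-Real.pi) Real.pi)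

/-- The periodization `p_Σ φ (z) = Σ_{k∈ℤⁿ} φ(z+2πk)`. -/
def periodization {n : ℕ} (φ : EuclideanSpace ℝ (Fin n) → ℂ)
    (z : EuclideanSpace ℝ (Fin n)) : ℂ :=
  ∑' k : Fin n → ℤ, φ (z + lat k)

/-- The Fourier transform `φ̂(ξ) = (2π)^{-n} ∫ φ(x) e^{-i x·ξ} dx`. -/
def ft {n : ℕ} (φ : EuclideanSpace ℝ (Fin n) → ℂ) (ξ : EuclideanSpace ℝ (Fin n)) : ℂ :=
  ((2 * Real.pi) ^ n : ℂ)⁻¹ * ∫ x, φ x * Complex.exp (-Complex.I * (⟪x, ξ⟫ : ℝ))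

/-- The `k`-th Fourier coefficient `c_k(g) = (2π)^{-n} ∫_{(-π,π]ⁿ} g(z) e^{-i k·z} dz`. -/
def fourierCoeff' {n : ℕ} (g : EuclideanSpace ℝ (Fin n) → ℂ) (k : Fin n → ℤ) : ℂ :=
  ((2 * Real.pi) ^ n : ℂ)⁻¹ * ∫ z in cube n, g z * Complex.exp (-Complex.I * (⟪z, ivec k⟫ : ℝ))

open Set

lemma sub_lemma (σ a : ℝ) (ha : 0 < a) :
    ∫ t in Ioi (0:ℝ), Real.exp (-a/(4*t)) * Real.exp (-t) * t^(σ-1)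
      = (a/4)^σ * ∫ r in Ioi (0:ℝ), Real.exp (-a/(4*r)) * Real.exp (-r) * r^(-(1+σ)) := by
  set c : ℝ := a/4 with hc
  have hc0 : 0 < c := by positivity
  set Fr : ℝ → ℝ := fun r => Real.exp (-a/(4*r)) * Real.exp (-r) * r^(-(1+σ)) with hFr
  have h1 : ∫ r in Ioi (0:ℝ), Fr r = c • ∫ y in Ioi (0:ℝ), Fr (c*y) := by
    rw [integral_comp_mul_left_Ioi Fr 0 hc0, mul_zero, smul_smul, mul_inv_cancel₀ hc0.ne',
      one_smul]
  have h2 : ∫ y in Ioi (0:ℝ), Fr (c*y)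
      = ∫ x in Ioi (0:ℝ), (|(-1:ℝ)| * x ^ ((-1:ℝ) - 1)) • Fr (c * x ^ (-1:ℝ)) :=
    (integral_comp_rpow_Ioi (fun y => Fr (c*y)) (by norm_num)).symm
  have h3 : ∫ x in Ioi (0:ℝ), (|(-1:ℝ)| * x ^ ((-1:ℝ) - 1)) • Fr (c * x ^ (-1:ℝ))
      = c^(-(1+σ)) * ∫ x in Ioi (0:ℝ), Real.exp (-a/(4*x)) * Real.exp (-x) * x^(σ-1) := by
    rw [← integral_const_mul]
    apply setIntegral_congr_fun measurableSet_Ioi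
    intro x hx
    have hx0 : (0:ℝ) < x := hx
    dsimp only
    have hcx : c * x ^ (-1:ℝ) = c / x := by rw [Real.rpow_neg_one]; ring
    rw [hcx]
    have e1 : -a/(4*(c/x)) = -x := by rw [hc]; field_simp
    have e2 : -(c/x) = -a/(4*x) := by rw [hc]; ring
    have e3 : (c/x)^(-(1+σ)) = c^(-(1+σ)) * x^(1+σ) := by
      rw [Real.div_rpow hc0.le hx0.le, Real.rpow_neg hx0.le, div_eq_mul_inv, inv_inv]
    simp only [hFr]
    rw [e1, e2, e3, abs_neg, abs_one, one_mul, smul_eq_mul]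
    have e5 : x ^ ((-1:ℝ)-1) * x^(1+σ) = x^(σ-1) := by
      rw [← Real.rpow_add hx0]; congr 1; ring
    linear_combination (Real.exp (-x) * Real.exp (-a/(4*x)) * c^(-(1+σ))) * e5
  rw [h1, h2, h3, smul_eq_mul, ← mul_assoc, ← mul_assoc]
  have h4 : (a/4)^σ * c * c^(-(1+σ)) = 1 := by
    rw [← hc, ← Real.rpow_add_one hc0.ne' σ, ← Real.rpow_add hc0,
      show σ+1+ -(1+σ) = 0 by ring, Real.rpow_zero]
  rw [h4, one_mul]

lemma my_integral_ofReal {α : Type*} [MeasurableSpace α] {μ : MeasureTheory.Measure α} {f : α → ℝ} :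
    ∫ x, ((f x : ℝ) : ℂ) ∂μ = ((∫ x, f x ∂μ : ℝ) : ℂ) := integral_ofReal

lemma gauss_int (n : ℕ) (w : EuclideanSpace ℝ (Fin n)) {t : ℝ} (ht : 0 < t) :
    ∫ x : EuclideanSpace ℝ (Fin n), Complex.exp (-(t:ℂ) * ‖x‖^2 + (-Complex.I) * (⟪w, x⟫:ℝ))
      = (((π/t) ^ ((n:ℝ)/2) * Real.exp (-(‖w‖^2)/(4*t)) : ℝ) : ℂ) := by
  rw [GaussianFourier.integral_cexp_neg_mul_sq_norm_add (by simpa using ht) (-Complex.I) w]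
  rw [finrank_euclideanSpace, Fintype.card_fin]
  rw [Complex.ofReal_mul, Complex.ofReal_cpow (by positivity), Complex.ofReal_exp]
  congr 1
  · congr 1 <;> (push_cast; ring)
  · congr 1
    rw [neg_sq, Complex.I_sq]
    push_cast
    ring


/-- for `0 < σ < 1` and `k ∈ ℤⁿ`, `k ≠ 0`, the Fourier transform
(normalized `f̂(ξ) = (2π)^{-n}∫ f e^{-ix·ξ} dx`) of `x ↦ (1+|x|²)^{-(n+2σ)/2}` at `k`
equals `c_{n,σ} |k|^{2σ} ∫_0^∞ e^{-|k|²/(4r)} e^{-r} r^{-(1+σ)} dr`, with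
`c_{n,σ} = ((4π)^{n/2} 4^σ Γ((n+2σ)/2))⁻¹`. -/
theorem fourier_transform_bessel_weight (n : ℕ) (hn : 1 ≤ n) (σ : ℝ)
    (hσ : 0 < σ) (hσ1 : σ < 1) (k : Fin n → ℤ) (hk : k ≠ 0) :
    ft (fun x => ((1 + ‖x‖ ^ 2) ^ (-((n : ℝ) + 2 * σ) / 2) : ℝ)) (ivec k) =
      ((((4 * Real.pi) ^ ((n : ℝ) / 2) * 4 ^ σ * Real.Gamma (((n : ℝ) + 2 * σ) / 2))⁻¹ *
        ‖ivec k‖ ^ (2 * σ) *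
        ∫ r in Set.Ioi (0 : ℝ),
          Real.exp (-(‖ivec k‖ ^ 2) / (4 * r)) * Real.exp (-r) * r ^ (-(1 + σ)) : ℝ) : ℂ) := by
  have hπ := Real.pi_pos
  set s : ℝ := ((n:ℝ) + 2*σ)/2 with hs_def
  have hs : 0 < s := by rw [hs_def]; positivity
  have hΓ : 0 < Real.Gamma s := Real.Gamma_pos_of_pos hs
  have hiv : ivec k ≠ 0 := by
    intro h
    apply hk
    funext i
    have h2 := congrArg (fun v : EuclideanSpace ℝ (Fin n) => v i) h
    simpa [ivec] using h2
  have hkn : 0 < ‖ivec k‖ := norm_pos_iff.mpr hiv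
  have ha : (0:ℝ) < ‖ivec k‖^2 := by positivity
  -- the double integrand
  set F : EuclideanSpace ℝ (Fin n) → ℝ → ℂ := fun x t =>
    ((t ^ (s-1) * Real.exp (-((1 + ‖x‖^2) * t)) : ℝ) : ℂ) *
      Complex.exp (-Complex.I * (⟪x, ivec k⟫:ℝ)) with hF_def
  have hFnice : ∀ t ∈ Ioi (0:ℝ), ∀ x, F x t
      = ((t^(s-1) * Real.exp (-t) : ℝ):ℂ) *
        Complex.exp (-(t:ℂ) * ‖x‖^2 + (-Complex.I) * (⟪ivec k, x⟫:ℝ)) := by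
    intro t ht x
    simp only [hF_def]
    have e1 : Complex.exp (-(t:ℂ) * (‖x‖:ℂ)^2) = ((Real.exp (-t * ‖x‖^2) : ℝ) : ℂ) := by
      rw [Complex.ofReal_exp]; congr 1; push_cast; ring
    rw [real_inner_comm (ivec k) x, Complex.exp_add, e1,
      show -((1+‖x‖^2)*t) = -t + -t * ‖x‖^2 by ring, Real.exp_add]
    push_cast [-Complex.ofReal_exp]
    ring
  have hFint : ∀ t ∈ Ioi (0:ℝ), Integrable (fun x => F x t) := by
    intro t ht
    have := (GaussianFourier.integrable_cexp_neg_mul_sq_norm_add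
        (V := EuclideanSpace ℝ (Fin n)) (b := (t:ℂ)) (by simpa using ht)
        (-Complex.I) (ivec k)).const_mul ((t^(s-1) * Real.exp (-t) : ℝ) : ℂ)
    apply this.congr
    filter_upwards with x using (hFnice t ht x).symm
  have hnorm : ∀ t ∈ Ioi (0:ℝ), ∀ x : EuclideanSpace ℝ (Fin n),
      ‖F x t‖ = (t^(s-1) * Real.exp (-t)) * Real.exp (-t * ‖x‖^2) := by
    intro t ht x
    have ht' : (0:ℝ) < t := ht
    rw [hFnice t ht x, norm_mul, Complex.norm_real, Real.norm_eq_abs,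
      abs_of_nonneg (mul_nonneg (Real.rpow_nonneg ht'.le _) (Real.exp_pos _).le)]
    congr 1
    rw [show -(t:ℂ) * (‖x‖:ℂ)^2 + (-Complex.I) * ((⟪ivec k, x⟫:ℝ):ℂ)
        = ((-t * ‖x‖^2 : ℝ):ℂ) + ((-⟪ivec k, x⟫:ℝ):ℂ) * Complex.I by push_cast; ring,
      Complex.exp_add, norm_mul,
      Complex.norm_exp_ofReal_mul_I, mul_one, Complex.norm_exp, Complex.ofReal_re]
  have hpow : ∀ t : ℝ, 0 < t → t^(s-1) * (π/t)^((n:ℝ)/2) = π^((n:ℝ)/2) * t^(σ-1) := by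
    intro t ht'
    rw [Real.div_rpow Real.pi_pos.le ht'.le,
      show t^(s-1) * (π^((n:ℝ)/2) / t^((n:ℝ)/2)) = π^((n:ℝ)/2) * (t^(s-1) / t^((n:ℝ)/2)) by ring,
      ← Real.rpow_sub ht']
    congr 1
    rw [hs_def]; ring
  have hgauss_norm : ∀ t ∈ Ioi (0:ℝ), (∫ x : EuclideanSpace ℝ (Fin n), ‖F x t‖)
      = π^((n:ℝ)/2) * (Real.exp (-t) * t^(σ-1)) := by
    intro t ht
    have ht' : (0:ℝ) < t := ht
    calc (∫ x : EuclideanSpace ℝ (Fin n), ‖F x t‖)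
        = ∫ x : EuclideanSpace ℝ (Fin n), (t^(s-1) * Real.exp (-t)) * Real.exp (-t * ‖x‖^2) := by
          apply integral_congr_ae
          filter_upwards with x using hnorm t ht x
      _ = (t^(s-1) * Real.exp (-t)) * ∫ x : EuclideanSpace ℝ (Fin n), Real.exp (-t * ‖x‖^2) :=
          integral_const_mul _ _
      _ = (t^(s-1) * Real.exp (-t)) * (π/t)^((n:ℝ)/2) := by
          rw [GaussianFourier.integral_rexp_neg_mul_sq_norm ht',
            finrank_euclideanSpace, Fintype.card_fin]
      _ = π^((n:ℝ)/2) * (Real.exp (-t) * t^(σ-1)) := by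
          linear_combination Real.exp (-t) * hpow t ht'
  have hmeas : AEStronglyMeasurable (Function.uncurry F)
      ((volume : Measure (EuclideanSpace ℝ (Fin n))).prod (volume.restrict (Ioi 0))) := by
    apply Measurable.aestronglyMeasurable
    have m1 : Measurable fun p : EuclideanSpace ℝ (Fin n) × ℝ =>
        p.2 ^ (s-1) * Real.exp (-((1+‖p.1‖^2) * p.2)) := by fun_prop
    have m3 : Measurable fun p : EuclideanSpace ℝ (Fin n) × ℝ => (⟪p.1, ivec k⟫ : ℝ) :=
      (continuous_fst.inner continuous_const).measurable
    exact (Complex.measurable_ofReal.comp m1).mul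
      (Complex.measurable_exp.comp (measurable_const.mul (Complex.measurable_ofReal.comp m3)))
  have hF : Integrable (Function.uncurry F)
      ((volume : Measure (EuclideanSpace ℝ (Fin n))).prod (volume.restrict (Ioi 0))) := by
    rw [integrable_prod_iff' hmeas]
    constructor
    · filter_upwards [ae_restrict_mem measurableSet_Ioi] with t ht
      exact hFint t ht
    · apply Integrable.congr (((Real.GammaIntegral_convergent hσ).const_mul (π^((n:ℝ)/2))))
      filter_upwards [ae_restrict_mem measurableSet_Ioi] with t ht
      exact (hgauss_norm t ht).symm
  have key1 : ∀ x : EuclideanSpace ℝ (Fin n),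
      (((1 + ‖x‖^2) ^ (-s) : ℝ) : ℂ) * Complex.exp (-Complex.I * (⟪x, ivec k⟫ : ℝ))
      = (Real.Gamma s : ℂ)⁻¹ * ∫ t in Ioi (0:ℝ), F x t := by
    intro x
    have hr : (0:ℝ) < 1 + ‖x‖^2 := by positivity
    have h1 : ∫ t in Ioi (0:ℝ), t ^ (s-1) * Real.exp (-((1 + ‖x‖^2) * t))
        = (1 / (1+‖x‖^2)) ^ s * Real.Gamma s :=
      Real.integral_rpow_mul_exp_neg_mul_Ioi hs hr
    have h2 : ((1 + ‖x‖^2) ^ (-s) : ℝ)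
        = (Real.Gamma s)⁻¹ * ((1 / (1+‖x‖^2)) ^ s * Real.Gamma s) := by
      rw [one_div, Real.inv_rpow hr.le, ← Real.rpow_neg hr.le]
      field_simp
    simp only [hF_def]
    rw [integral_mul_const, my_integral_ofReal, h1, h2]
    push_cast
    ring
  have f1 : (‖ivec k‖^2 : ℝ)^σ = ‖ivec k‖^(2*σ) := by
    rw [← Real.rpow_natCast ‖ivec k‖ 2, ← Real.rpow_mul hkn.le]
    norm_num
  have h2π : (0:ℝ) < 2*π := by positivity
  have f2 : ((4*π)^((n:ℝ)/2)) * π^((n:ℝ)/2) = (2*π)^n := by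
    rw [← Real.mul_rpow (by positivity) Real.pi_pos.le,
      show (4*π)*π = (2*π)^(2:ℕ) by ring, ← Real.rpow_natCast (2*π) 2,
      ← Real.rpow_mul h2π.le, show ((2:ℕ):ℝ) * ((n:ℝ)/2) = (n:ℝ) by push_cast; ring,
      Real.rpow_natCast]
  have hconst : ∀ j : ℝ, (((2*π)^n : ℝ))⁻¹ *
        ((Real.Gamma s)⁻¹ * (π^((n:ℝ)/2) * ((‖ivec k‖^2/4)^σ * j)))
      = ((4*π)^((n:ℝ)/2) * 4^σ * Real.Gamma s)⁻¹ * ‖ivec k‖^(2*σ) * j := by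
    intro j
    rw [Real.div_rpow (sq_nonneg _) (by norm_num : (0:ℝ) ≤ 4), f1, ← f2]
    have p1 : (0:ℝ) < (4:ℝ)^σ := Real.rpow_pos_of_pos (by norm_num) σ
    have p2 : (0:ℝ) < (4*π)^((n:ℝ)/2) := Real.rpow_pos_of_pos (by positivity) _
    have p3 : (0:ℝ) < π^((n:ℝ)/2) := Real.rpow_pos_of_pos Real.pi_pos _
    field_simp
  calc ft (fun x => ((1 + ‖x‖ ^ 2) ^ (-((n : ℝ) + 2 * σ) / 2) : ℝ)) (ivec k)
      = ((2 * Real.pi) ^ n : ℂ)⁻¹ * ∫ x : EuclideanSpace ℝ (Fin n),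
          (((1 + ‖x‖^2) ^ (-s) : ℝ) : ℂ) * Complex.exp (-Complex.I * (⟪x, ivec k⟫ : ℝ)) := by
        rw [ft]
        simp only [neg_div, ← hs_def]
    _ = ((2 * Real.pi) ^ n : ℂ)⁻¹ * ((Real.Gamma s : ℂ)⁻¹ *
          ∫ x : EuclideanSpace ℝ (Fin n), ∫ t in Ioi (0:ℝ), F x t) := by
        simp only [key1]
        rw [integral_const_mul]
    _ = ((2 * Real.pi) ^ n : ℂ)⁻¹ * ((Real.Gamma s : ℂ)⁻¹ *
          ∫ t in Ioi (0:ℝ), ∫ x : EuclideanSpace ℝ (Fin n), F x t) := by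
        rw [integral_integral_swap hF]
    _ = ((2 * Real.pi) ^ n : ℂ)⁻¹ * ((Real.Gamma s : ℂ)⁻¹ *
          ∫ t in Ioi (0:ℝ), ((π^((n:ℝ)/2) *
            (Real.exp (-(‖ivec k‖^2)/(4*t)) * Real.exp (-t) * t^(σ-1)) : ℝ) : ℂ)) := by
        congr 2
        apply setIntegral_congr_fun measurableSet_Ioi (fun t ht => ?_)
        have ht' : (0:ℝ) < t := ht
        calc (∫ x : EuclideanSpace ℝ (Fin n), F x t)
            = ∫ x : EuclideanSpace ℝ (Fin n), ((t^(s-1) * Real.exp (-t) : ℝ):ℂ) *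
                Complex.exp (-(t:ℂ) * ‖x‖^2 + (-Complex.I) * (⟪ivec k, x⟫:ℝ)) :=
              integral_congr_ae (Filter.Eventually.of_forall (hFnice t ht))
          _ = ((t^(s-1) * Real.exp (-t) : ℝ):ℂ) *
                ∫ x : EuclideanSpace ℝ (Fin n),
                  Complex.exp (-(t:ℂ) * ‖x‖^2 + (-Complex.I) * (⟪ivec k, x⟫:ℝ)) :=
              integral_const_mul _ _
          _ = ((t^(s-1) * Real.exp (-t) : ℝ):ℂ) *
                (((π/t) ^ ((n:ℝ)/2) * Real.exp (-(‖ivec k‖^2)/(4*t)) : ℝ) : ℂ) := by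
              rw [gauss_int n (ivec k) ht']
          _ = ((π^((n:ℝ)/2) *
                (Real.exp (-(‖ivec k‖^2)/(4*t)) * Real.exp (-t) * t^(σ-1)) : ℝ) : ℂ) := by
              rw [← Complex.ofReal_mul]
              congr 1
              linear_combination (Real.exp (-t) * Real.exp (-(‖ivec k‖^2)/(4*t))) * hpow t ht'
    _ = ((2 * Real.pi) ^ n : ℂ)⁻¹ * ((Real.Gamma s : ℂ)⁻¹ *
          Complex.ofReal (π^((n:ℝ)/2) * ((‖ivec k‖^2/4)^σ * ∫ r in Ioi (0:ℝ),
            Real.exp (-(‖ivec k‖^2)/(4*r)) * Real.exp (-r) * r^(-(1+σ))))) := by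
        rw [my_integral_ofReal, MeasureTheory.integral_const_mul, sub_lemma σ (‖ivec k‖^2) ha]
    _ = Complex.ofReal ((((2*π)^n : ℝ))⁻¹ * ((Real.Gamma s)⁻¹ *
          (π^((n:ℝ)/2) * ((‖ivec k‖^2/4)^σ * ∫ r in Ioi (0:ℝ),
            Real.exp (-(‖ivec k‖^2)/(4*r)) * Real.exp (-r) * r^(-(1+σ)))))) := by
        push_cast
        ring
    _ = ((((4 * Real.pi) ^ ((n : ℝ) / 2) * 4 ^ σ * Real.Gamma s)⁻¹ *
        ‖ivec k‖ ^ (2 * σ) *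
        ∫ r in Set.Ioi (0 : ℝ),
          Real.exp (-(‖ivec k‖ ^ 2) / (4 * r)) * Real.exp (-r) * r ^ (-(1 + σ)) : ℝ) : ℂ) := by
        rw [hconst]
end
end

section
/- Let 0 < σ < 1/2, and let u : ℝⁿ → ℝ be a bounded function that is Hölder continuous of order α with 2σ < α ≤ 1. Then for every x ∈ ℝⁿ the integral ∫_{ℝⁿ} (u(x)-u(y))/|x-y|^{n+2σ} dy is absolutely convergent, and x ↦ ∫_{ℝⁿ}(u(x)-u(y))/|x-y|^{n+2σ} dy is Hölder continuous of order α - 2σ with ‖·‖-bound C(n,σ,α)·‖u‖_{C^{0,α}}. -/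
noncomputable section
open MeasureTheory MeasureTheory.Measure Real Set Module

theorem integrable_radial {E : Type*} [NormedAddCommGroup E] [NormedSpace ℝ E]
    [MeasurableSpace E] [BorelSpace E] [FiniteDimensional ℝ E] [Nontrivial E]
    (μ : Measure E) [μ.IsAddHaarMeasure] {f : ℝ → ℝ}
    (hf : IntegrableOn (fun r => r ^ (finrank ℝ E - 1) * f r) (Ioi (0:ℝ))) :
    Integrable (fun x => f ‖x‖) μ := by
  have hs : MeasurableSet ({(0:E)}ᶜ) := (measurableSet_singleton 0).compl
  have hIoi : MeasurableSet (Ioi (0:ℝ)) := measurableSet_Ioi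
  have hA : Integrable (fun r : Ioi (0:ℝ) => r.1 ^ (finrank ℝ E - 1) * f r.1)
      (Measure.comap Subtype.val volume) := by
    have h0 : Integrable (fun r : ℝ => r ^ (finrank ℝ E - 1) * f r)
        (Measure.map (Subtype.val : Ioi (0:ℝ) → ℝ) (Measure.comap (Subtype.val : Ioi (0:ℝ) → ℝ) volume)) := by
      rw [map_comap_subtype_coe hIoi]; exact hf
    exact (MeasurableEmbedding.subtype_coe hIoi).integrable_map_iff.mp h0
  have hB : Integrable (fun r : Ioi (0:ℝ) => f r.1)
      (Measure.volumeIoiPow (finrank ℝ E - 1)) := by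
    rw [Measure.volumeIoiPow, integrable_withDensity_iff
      ((measurable_subtype_coe.pow_const _).ennreal_ofReal)
      (ae_of_all _ fun x => ENNReal.ofReal_lt_top)]
    exact hA.congr (ae_of_all _ fun r => by
      simp only []
      rw [ENNReal.toReal_ofReal (pow_nonneg (le_of_lt r.2) _), mul_comm])
  have hC : Integrable (f ∘ Subtype.val ∘ Prod.snd)
      (μ.toSphere.prod (Measure.volumeIoiPow (finrank ℝ E - 1))) := by
    have h1 : Integrable (f ∘ Subtype.val)
        ((μ.toSphere Set.univ) • Measure.volumeIoiPow (finrank ℝ E - 1)) :=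
      hB.smul_measure (measure_ne_top _ _)
    rw [← Measure.map_snd_prod] at h1
    exact (integrable_map_measure h1.aestronglyMeasurable
      measurable_snd.aemeasurable).mp h1
  have hD : Integrable (fun x : ({(0:E)}ᶜ : Set E) => f ‖x.1‖) (μ.comap Subtype.val) :=
    ((μ.measurePreserving_homeomorphUnitSphereProd).integrable_comp_emb
      (Homeomorph.measurableEmbedding _)).mpr hC |>.congr (ae_of_all _ fun x => by simp)
  have hE : Integrable (fun x : E => f ‖x‖) (μ.restrict {(0:E)}ᶜ) := by
    rw [← map_comap_subtype_coe hs,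
      (MeasurableEmbedding.subtype_coe hs).integrable_map_iff]
    exact hD
  rwa [restrict_compl_singleton] at hE

theorem kernel_integrable (n : ℕ) (hn : 1 ≤ n) (σ α c : ℝ) (hσ : 0 < σ)
    (hα2 : 2 * σ < α) (hc : 0 ≤ c) :
    Integrable (fun z : EuclideanSpace ℝ (Fin n) =>
      min c (‖z‖ ^ α) * ‖z‖ ^ (-((n : ℝ) + 2 * σ))) := by
  have hα0 : 0 < α := lt_trans (by positivity) hα2
  have hnt : Nontrivial (EuclideanSpace ℝ (Fin n)) := by
    have : 0 < finrank ℝ (EuclideanSpace ℝ (Fin n)) := by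
      rw [finrank_euclideanSpace_fin]; omega
    exact Module.nontrivial_of_finrank_pos this
  have key : IntegrableOn
      (fun r : ℝ => r ^ (finrank ℝ (EuclideanSpace ℝ (Fin n)) - 1) *
        (min c (r ^ α) * r ^ (-((n : ℝ) + 2 * σ)))) (Ioi (0:ℝ)) := by
    rw [finrank_euclideanSpace_fin]
    have hmeas : AEStronglyMeasurable
        (fun r : ℝ => r ^ (n - 1) * (min c (r ^ α) * r ^ (-((n : ℝ) + 2 * σ))))
        (volume.restrict (Ioi (0:ℝ))) := by
      apply Measurable.aestronglyMeasurable
      exact (measurable_id.pow_const _).mul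
        ((measurable_const.min (measurable_id.pow measurable_const)).mul
          (measurable_id.pow measurable_const))
    have h1 : IntegrableOn
        (fun r : ℝ => r ^ (n - 1) * (min c (r ^ α) * r ^ (-((n : ℝ) + 2 * σ))))
        (Ioo (0:ℝ) 2) := by
      refine Integrable.mono ((intervalIntegral.integrableOn_Ioo_rpow_iff two_pos).mpr
        (show (-1:ℝ) < α - 2*σ - 1 by linarith)) (hmeas.mono_set Ioo_subset_Ioi_self) ?_
      refine (ae_restrict_iff' measurableSet_Ioo).mpr (ae_of_all _ fun r hr => ?_)
      have hr0 : 0 < r := hr.1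
      have e1 : r ^ (n-1) * (r ^ α * r ^ (-((n : ℝ) + 2 * σ))) = r ^ (α - 2*σ - 1) := by
        rw [← rpow_natCast r (n-1), ← rpow_add hr0, ← rpow_add hr0]
        congr 1
        have : ((n - 1 : ℕ) : ℝ) = (n : ℝ) - 1 := by
          rw [Nat.cast_sub hn]; norm_num
        rw [this]; ring
      rw [norm_mul, norm_mul, norm_of_nonneg (pow_nonneg hr0.le _),
        norm_of_nonneg (le_min hc (rpow_nonneg hr0.le _)),
        norm_of_nonneg (rpow_nonneg hr0.le _), norm_of_nonneg (rpow_nonneg hr0.le _),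
        ← e1]
      have : min c (r ^ α) ≤ r ^ α := min_le_right _ _
      have h2 : (0:ℝ) ≤ r ^ (-((n : ℝ) + 2 * σ)) := rpow_nonneg hr0.le _
      exact mul_le_mul_of_nonneg_left (mul_le_mul_of_nonneg_right this h2) (pow_nonneg hr0.le _)
    have h2 : IntegrableOn
        (fun r : ℝ => r ^ (n - 1) * (min c (r ^ α) * r ^ (-((n : ℝ) + 2 * σ))))
        (Ioi (1:ℝ)) := by
      refine Integrable.mono (((integrableOn_Ioi_rpow_iff zero_lt_one).mpr
        (show -(1:ℝ) - 2*σ < -1 by linarith)).const_mul c)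
        (hmeas.mono_set (Ioi_subset_Ioi zero_le_one)) ?_
      refine (ae_restrict_iff' measurableSet_Ioi).mpr (ae_of_all _ fun r hr => ?_)
      have hr0 : 0 < r := lt_trans zero_lt_one hr
      have e1 : r ^ (n-1) * r ^ (-((n : ℝ) + 2 * σ)) = r ^ (-1 - 2*σ) := by
        rw [← rpow_natCast r (n-1), ← rpow_add hr0]
        congr 1
        have : ((n - 1 : ℕ) : ℝ) = (n : ℝ) - 1 := by
          rw [Nat.cast_sub hn]; norm_num
        rw [this]; ring
      rw [norm_mul, norm_mul, norm_of_nonneg (pow_nonneg hr0.le _),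
        norm_of_nonneg (le_min hc (rpow_nonneg hr0.le _)),
        norm_of_nonneg (rpow_nonneg hr0.le _),
        norm_of_nonneg (mul_nonneg hc (rpow_nonneg hr0.le _)), ← e1]
      have hle : min c (r ^ α) ≤ c := min_le_left _ _
      have h3 : (0:ℝ) ≤ r ^ (-((n : ℝ) + 2 * σ)) := rpow_nonneg hr0.le _
      have h4 : (0:ℝ) ≤ r ^ (n-1) := pow_nonneg hr0.le _
      calc r ^ (n-1) * (min c (r ^ α) * r ^ (-((n : ℝ) + 2 * σ)))
          ≤ r ^ (n-1) * (c * r ^ (-((n : ℝ) + 2 * σ))) := by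
            apply mul_le_mul_of_nonneg_left _ h4
            exact mul_le_mul_of_nonneg_right hle h3
        _ = c * (r ^ (n-1) * r ^ (-((n : ℝ) + 2 * σ))) := by ring
    exact ((h1.union h2).mono_set (fun r hr => by
      rcases lt_or_ge r 2 with h | h
      · exact Or.inl ⟨hr, h⟩
      · exact Or.inr (by simp only [mem_Ioi]; linarith [mem_Ioi.mp hr])))
  exact integrable_radial volume key

/-- for `0 < σ < 1/2` and `2σ < α ≤ 1` there is a constant
`C = C(n,σ,α) > 0` such that for every bounded `α`-Hölder function `u : ℝⁿ → ℝ`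
(with sup bound `B` and Hölder seminorm bound `H`), the singular integral
`x ↦ ∫_{ℝⁿ} (u(x)-u(y))/|x-y|^{n+2σ} dy` is absolutely convergent at every `x` and is
`(α-2σ)`-Hölder continuous with seminorm at most `C (B + H)`. -/
theorem frac_lap_holder_Rn (n : ℕ) (hn : 1 ≤ n) (σ α : ℝ)
    (hσ : 0 < σ) (hσ' : σ < 1 / 2) (hα : 2 * σ < α) (hα1 : α ≤ 1) :
    ∃ C : ℝ, 0 < C ∧
      ∀ (u : EuclideanSpace ℝ (Fin n) → ℝ) (B H : ℝ),
        Continuous u →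
        (∀ x, |u x| ≤ B) →
        (∀ x y, |u x - u y| ≤ H * ‖x - y‖ ^ α) →
        (∀ x : EuclideanSpace ℝ (Fin n),
          Integrable fun y => (u x - u y) / ‖x - y‖ ^ ((n : ℝ) + 2 * σ)) ∧
        (∀ x y : EuclideanSpace ℝ (Fin n),
          |(∫ w, (u x - u w) / ‖x - w‖ ^ ((n : ℝ) + 2 * σ)) -
            ∫ w, (u y - u w) / ‖y - w‖ ^ ((n : ℝ) + 2 * σ)| ≤
          C * (B + H) * ‖x - y‖ ^ (α - 2 * σ)) := by
  have hα0 : 0 < α := lt_trans (by positivity) hα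
  set E := EuclideanSpace ℝ (Fin n)
  set p : ℝ := (n : ℝ) + 2 * σ with hpdef
  have hp0 : 0 < p := by positivity
  -- base kernel and its integral
  set Φ : E → ℝ := fun z => min 1 (‖z‖ ^ α) * ‖z‖ ^ (-p) with hΦdef
  have hΦint : Integrable Φ := kernel_integrable n hn σ α 1 hσ hα zero_le_one
  set I₁ : ℝ := ∫ z : E, Φ z with hI₁def
  have hI₁0 : 0 ≤ I₁ := integral_nonneg fun z =>
    mul_nonneg (le_min zero_le_one (rpow_nonneg (norm_nonneg _) _) :
      (0:ℝ) ≤ min 1 (‖z‖ ^ α)) (rpow_nonneg (norm_nonneg _) _)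
  refine ⟨2 * I₁ + 1, by positivity, ?_⟩
  intro u B H hu hB hH
  have hB0 : 0 ≤ B := (abs_nonneg _).trans (hB 0)
  -- H is nonnegative
  have hH0 : 0 ≤ H := by
    have hnt : Nontrivial E := by
      have h0 : 0 < finrank ℝ E := by
        rw [show finrank ℝ E = n from finrank_euclideanSpace_fin]; omega
      exact Module.nontrivial_of_finrank_pos h0
    obtain ⟨v, hv0⟩ := exists_ne (0 : E)
    have ht : 0 < ‖(0:E) - v‖ ^ α := by
      apply rpow_pos_of_pos
      simpa using norm_pos_iff.mpr (sub_ne_zero.mpr (Ne.symm hv0))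
    have h1 : (0:ℝ) ≤ H * ‖(0:E) - v‖ ^ α := (abs_nonneg _).trans (hH 0 v)
    nlinarith
  -- measurability of the integrand
  have hmeas : ∀ x : E, AEStronglyMeasurable
      (fun w : E => (u x - u w) / ‖x - w‖ ^ p) volume := by
    intro x
    exact ((measurable_const.sub hu.measurable).div
      (((measurable_const.sub measurable_id).norm).pow measurable_const)).aestronglyMeasurable
  -- pointwise bound
  have hbound : ∀ x w : E, |(u x - u w) / ‖x - w‖ ^ p| ≤ (2*B + H) * Φ (x - w) := by
    intro x w
    have hz : (0:ℝ) ≤ ‖x - w‖ := norm_nonneg _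
    have key : |u x - u w| ≤ (2*B + H) * min 1 (‖x - w‖ ^ α) := by
      rcases le_or_gt (‖x - w‖) 1 with h | h
      · rw [min_eq_right (rpow_le_one hz h hα0.le)]
        calc |u x - u w| ≤ H * ‖x - w‖ ^ α := hH x w
          _ ≤ (2*B + H) * ‖x - w‖ ^ α := by
            apply mul_le_mul_of_nonneg_right (by linarith) (rpow_nonneg hz _)
      · rw [min_eq_left (one_le_rpow h.le hα0.le)]
        calc |u x - u w| ≤ |u x| + |u w| := abs_sub _ _
          _ ≤ (2*B + H) * 1 := by have := hB x; have := hB w; linarith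
    calc |(u x - u w) / ‖x - w‖ ^ p| = |u x - u w| * (‖x - w‖ ^ p)⁻¹ := by
          rw [abs_div, abs_of_nonneg (rpow_nonneg hz _), div_eq_mul_inv]
      _ ≤ ((2*B + H) * min 1 (‖x - w‖ ^ α)) * (‖x - w‖ ^ p)⁻¹ :=
          mul_le_mul_of_nonneg_right key (inv_nonneg.mpr (rpow_nonneg hz _))
      _ = (2*B + H) * Φ (x - w) := by
          rw [hΦdef]; simp only []
          rw [rpow_neg hz, mul_assoc]
  -- integrability of the shifted kernel
  have hΦshift : ∀ x : E, Integrable (fun w : E => Φ (x - w)) := by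
    intro x
    have := (measurePreserving_sub_left (volume : Measure E) x).integrable_comp_emb
      (MeasurableEquiv.subLeft x).measurableEmbedding (g := Φ)
    exact this.mpr hΦint
  -- absolute convergence
  have hconv : ∀ x : E, Integrable (fun w : E => (u x - u w) / ‖x - w‖ ^ p) := by
    intro x
    refine Integrable.mono' (((hΦshift x).const_mul (2*B + H))) (hmeas x) ?_
    exact ae_of_all _ fun w => by
      rw [Real.norm_eq_abs]; exact hbound x w
  refine ⟨hconv, ?_⟩
  -- integrability of the recentred integrand
  have hconv' : ∀ x : E, Integrable (fun z : E => (u x - u (x - z)) / ‖z‖ ^ p) := by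
    intro x
    have h1 := ((measurePreserving_sub_left (volume : Measure E) x).integrable_comp_emb
      (MeasurableEquiv.subLeft x).measurableEmbedding
      (g := fun w : E => (u x - u w) / ‖x - w‖ ^ p)).mpr (hconv x)
    refine h1.congr (ae_of_all _ fun z => ?_)
    simp [MeasurableEquiv.subLeft, sub_sub_cancel]
  -- change of variables
  have hshift : ∀ x : E, (∫ w, (u x - u w) / ‖x - w‖ ^ p)
      = ∫ z, (u x - u (x - z)) / ‖z‖ ^ p := by
    intro x
    rw [← integral_sub_left_eq_self (fun w : E => (u x - u w) / ‖x - w‖ ^ p) volume x]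
    congr 1
    funext z
    rw [sub_sub_cancel]
  intro x y
  rcases eq_or_ne x y with rfl | hxy
  · simp only [_root_.sub_self, abs_zero, norm_zero]
    rw [zero_rpow (by intro h; nlinarith : α - 2 * σ ≠ 0)]
    simp
  · set r : ℝ := ‖x - y‖ with hrdef
    have hr0 : 0 < r := norm_pos_iff.mpr (sub_ne_zero.mpr hxy)
    rw [hshift x, hshift y, ← integral_sub (hconv' x) (hconv' y)]
    -- the dominating function
    have hG : Integrable (fun z : E => 2*H * (min (r ^ α) (‖z‖ ^ α) * ‖z‖ ^ (-p))) :=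
      (kernel_integrable n hn σ α (r ^ α) hσ hα (rpow_nonneg hr0.le α)).const_mul (2*H)
    have hptwise : ∀ z : E,
        ‖(u x - u (x - z)) / ‖z‖ ^ p - (u y - u (y - z)) / ‖z‖ ^ p‖ ≤
          2*H * (min (r ^ α) (‖z‖ ^ α) * ‖z‖ ^ (-p)) := by
      intro z
      have hz : (0:ℝ) ≤ ‖z‖ := norm_nonneg _
      have key : |(u x - u (x - z)) - (u y - u (y - z))| ≤ 2*H * min (r ^ α) (‖z‖ ^ α) := by
        rcases le_total (r ^ α) (‖z‖ ^ α) with h | h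
        · rw [min_eq_left h]
          have e1 : (u x - u (x - z)) - (u y - u (y - z))
              = (u x - u y) - (u (x - z) - u (y - z)) := by ring
          rw [e1]
          have h2 : |u (x - z) - u (y - z)| ≤ H * r ^ α := by
            have := hH (x - z) (y - z)
            rwa [sub_sub_sub_cancel_right] at this
          calc |(u x - u y) - (u (x - z) - u (y - z))|
              ≤ |u x - u y| + |u (x - z) - u (y - z)| := abs_sub _ _
            _ ≤ H * r ^ α + H * r ^ α := add_le_add (hH x y) h2
            _ = 2*H * r ^ α := by ring
        · rw [min_eq_right h]
          have h1 : |u x - u (x - z)| ≤ H * ‖z‖ ^ α := by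
            have := hH x (x - z); rwa [sub_sub_cancel] at this
          have h2 : |u y - u (y - z)| ≤ H * ‖z‖ ^ α := by
            have := hH y (y - z); rwa [sub_sub_cancel] at this
          calc |(u x - u (x - z)) - (u y - u (y - z))|
              ≤ |u x - u (x - z)| + |u y - u (y - z)| := abs_sub _ _
            _ ≤ 2*H * ‖z‖ ^ α := by linarith
      calc ‖(u x - u (x - z)) / ‖z‖ ^ p - (u y - u (y - z)) / ‖z‖ ^ p‖
          = |((u x - u (x - z)) - (u y - u (y - z)))| * (‖z‖ ^ p)⁻¹ := by
            rw [div_sub_div_same, Real.norm_eq_abs, abs_div,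
              abs_of_nonneg (rpow_nonneg hz _), div_eq_mul_inv]
        _ ≤ (2*H * min (r ^ α) (‖z‖ ^ α)) * (‖z‖ ^ p)⁻¹ :=
            mul_le_mul_of_nonneg_right key (inv_nonneg.mpr (rpow_nonneg hz _))
        _ = 2*H * (min (r ^ α) (‖z‖ ^ α) * ‖z‖ ^ (-p)) := by
            rw [rpow_neg hz, mul_assoc]
    have hle := norm_integral_le_of_norm_le hG (ae_of_all _ hptwise)
    rw [Real.norm_eq_abs] at hle
    refine hle.trans ?_
    -- scaling identity
    have hscale : (∫ z : E, min (r ^ α) (‖z‖ ^ α) * ‖z‖ ^ (-p)) = r ^ (α - 2*σ) * I₁ := by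
      have hcs := Measure.integral_comp_smul_of_nonneg (volume : Measure E)
        (fun z : E => min (r ^ α) (‖z‖ ^ α) * ‖z‖ ^ (-p)) r (hR := hr0.le)
      have hpt : ∀ z : E, min (r ^ α) (‖r • z‖ ^ α) * ‖r • z‖ ^ (-p)
          = r ^ (α - p) * Φ z := by
        intro z
        have hnrm : ‖r • z‖ = r * ‖z‖ := by
          rw [norm_smul, Real.norm_eq_abs, abs_of_pos hr0]
        rw [hnrm, mul_rpow hr0.le (norm_nonneg _), mul_rpow hr0.le (norm_nonneg _)]
        have e2 : min (r ^ α) (r ^ α * ‖z‖ ^ α) = r ^ α * min 1 (‖z‖ ^ α) := by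
          rw [mul_min_of_nonneg _ _ (rpow_nonneg hr0.le α), mul_one]
        rw [e2, hΦdef]
        simp only []
        rw [show α - p = α + -p from by ring, rpow_add hr0]
        ring
      rw [funext fun z => hpt z] at hcs
      rw [integral_const_mul, smul_eq_mul] at hcs
      have hfr : finrank ℝ E = n := finrank_euclideanSpace_fin
      rw [hfr] at hcs
      have hrn : (0:ℝ) < r ^ n := pow_pos hr0 n
      have heq : (∫ z : E, min (r ^ α) (‖z‖ ^ α) * ‖z‖ ^ (-p))
          = r ^ n * (r ^ (α - p) * I₁) := by
        rw [hI₁def, hcs, ← mul_assoc, mul_inv_cancel₀ hrn.ne', one_mul]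
      rw [heq, ← rpow_natCast r n, ← mul_assoc, ← rpow_add hr0]
      congr 2
      rw [hpdef]; ring
    rw [integral_const_mul, hscale]
    have hrp : (0:ℝ) ≤ r ^ (α - 2*σ) := rpow_nonneg hr0.le _
    have hHle : H ≤ B + H := by linarith
    nlinarith [mul_nonneg hI₁0 hrp, mul_nonneg (mul_nonneg hH0 hI₁0) hrp,
      mul_nonneg hB0 (mul_nonneg hI₁0 hrp), mul_nonneg hB0 hrp, mul_nonneg hH0 hrp]
end
end
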